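/- Let j₁, j₂, j₃ be pairwise distinct positive real numbers, let t₀ > 2 be a real root of j₁j₂t³ − (j₁² + j₂² + j₃²)t² + 4j₃² = 0, and set y± = (t₀ ± √(t₀² − 4))/2, z± = √(y±(j₁ − j₂y±)/(j₂ − j₁y±)), b₁± = (j₃/(t₀ y± z±))^{1/3}, b₂± = y± b₁±, b₃± = z± b₁±, K = (j₃/t₀)^{2/3}. Then for each sign, (b₁±b₂±)² + (b₂±b₃±)² + (b₃±b₁±)² = K²(y±² + z±² + y±²z±²)/(y±z±)^{4/3}, and the two values are different: (b₁₊b₂₊)² + (b₂₊b₃₊)² + (b₃₊b₁₊)² ≠ (b₁₋b₂₋)² + (b₂₋b₃₋)² + (b₃₋b₁₋)². -/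

import Mathlib

private lemma rpow_third_cube (x : ℝ) (hx : 0 < x) : (x ^ ((1:ℝ)/3)) ^ (3:ℕ) = x := by
  rw [← Real.rpow_natCast (x ^ ((1:ℝ)/3)) 3, ← Real.rpow_mul hx.le]
  norm_num

private lemma cube_rpow_four (x : ℝ) (hx : 0 < x) : (x ^ (3:ℕ)) ^ ((4:ℝ)/3) = x ^ (4:ℕ) := by
  rw [← Real.rpow_natCast x 3, ← Real.rpow_mul hx.le, ← Real.rpow_natCast x 4]
  norm_num

private lemma val_eq (j₃ t y z K b1 b2 b3 : ℝ) (hj : 0 < j₃) (ht : 0 < t) (hy : 0 < y)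
    (hz : 0 < z)
    (hb1 : b1 = (j₃/(t*y*z)) ^ ((1:ℝ)/3)) (hb2 : b2 = y*b1) (hb3 : b3 = z*b1)
    (hK : K = (j₃/t) ^ ((2:ℝ)/3)) :
    (b1*b2)^2+(b2*b3)^2+(b3*b1)^2 = K^2*(y^2+z^2+y^2*z^2)/(y*z)^((4:ℝ)/3) := by
  have hX : 0 < j₃/(t*y*z) := by positivity
  have hyz : 0 < y*z := by positivity
  have hb14 : b1^(4:ℕ) = (j₃/t)^((4:ℝ)/3) / (y*z)^((4:ℝ)/3) := by
    rw [hb1, ← Real.rpow_natCast ((j₃/(t*y*z)) ^ ((1:ℝ)/3)) 4, ← Real.rpow_mul hX.le,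
      show j₃/(t*y*z) = (j₃/t)/(y*z) by ring,
      Real.div_rpow (by positivity) hyz.le]
    norm_num
  have hK2 : K^2 = (j₃/t)^((4:ℝ)/3) := by
    rw [hK, ← Real.rpow_natCast ((j₃/t) ^ ((2:ℝ)/3)) 2, ← Real.rpow_mul (by positivity)]
    norm_num
  have hyz43 : (0:ℝ) < (y*z)^((4:ℝ)/3) := Real.rpow_pos_of_pos hyz _
  have expand : (b1*b2)^2+(b2*b3)^2+(b3*b1)^2 = b1^(4:ℕ)*(y^2+z^2+y^2*z^2) := by
    rw [hb2, hb3]; ring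
  rw [expand, hb14, hK2]
  ring

private lemma branch (j₁ j₂ j₃ t y z : ℝ) (h₁ : 0 < j₁) (h₂ : 0 < j₂) (h₃ : 0 < j₃)
    (ht : 2 < t)
    (hroot : j₁*j₂*t^3 - (j₁^2+j₂^2+j₃^2)*t^2 + 4*j₃^2 = 0)
    (hy0 : 0 < y) (hy2 : y^2 = t*y - 1)
    (hz : z = Real.sqrt (y*(j₁ - j₂*y)/(j₂ - j₁*y))) :
    0 < z ∧ j₂ - j₁*y ≠ 0 ∧ z^2 = y*(j₁ - j₂*y)/(j₂ - j₁*y) ∧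
      j₃*(1+z^2) = j₂*(t*z) ∧ j₃*(y^2+z^2) = j₁*(t*(y*z)) := by
  have ht0 : (0:ℝ) < t := by linarith
  have hMt : (j₁*j₂*t - j₁^2 - j₂^2)*t^2 = j₃^2*(t^2-4) := by linear_combination hroot
  have ht4 : (0:ℝ) < t^2 - 4 := by nlinarith
  have hM0 : 0 < j₁*j₂*t - j₁^2 - j₂^2 := by nlinarith [sq_nonneg j₃, mul_pos h₃ h₃]
  have hd : j₂ - j₁*y ≠ 0 := by
    intro h0
    have : j₁*j₂*t - j₁^2 - j₂^2 = 0 := by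
      linear_combination (j₁*t - j₁*y - j₂)*h0 + (-(j₁^2))*hy2
    exact hM0.ne' this
  have hd2ne : (j₂ - j₁*y)^2 ≠ 0 := pow_ne_zero 2 hd
  have hd2pos : 0 < (j₂ - j₁*y)^2 := (sq_nonneg _).lt_of_ne (Ne.symm hd2ne)
  have hEeq : y*(j₁ - j₂*y)/(j₂ - j₁*y)
      = y^2*(j₁*j₂*t - j₁^2 - j₂^2)/(j₂ - j₁*y)^2 := by
    rw [div_eq_div_iff hd hd2ne]
    linear_combination j₁*j₂*y*(j₂ - j₁*y)*hy2
  have hE0 : 0 < y*(j₁ - j₂*y)/(j₂ - j₁*y) := by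
    rw [hEeq]
    exact div_pos (mul_pos (pow_pos hy0 2) hM0) hd2pos
  have hz0 : 0 < z := by rw [hz]; exact Real.sqrt_pos.mpr hE0
  have hz2 : z^2 = y*(j₁ - j₂*y)/(j₂ - j₁*y) := by rw [hz]; exact Real.sq_sqrt hE0.le
  have hzd : z^2*(j₂ - j₁*y)^2 = y^2*(j₁*j₂*t - j₁^2 - j₂^2) := by
    rw [hz2, hEeq, div_mul_cancel₀ _ hd2ne]
  have hA : (j₂ - j₁*y)^2 + y^2*(j₁*j₂*t - j₁^2 - j₂^2)
      = j₂*((2*j₂ - j₁*t) + y*(j₁*(t^2-2) - j₂*t)) := by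
    linear_combination (j₁*j₂*t - j₂^2)*hy2
  have hAsq : ((2*j₂ - j₁*t) + y*(j₁*(t^2-2) - j₂*t))^2 = (t^2-4)*(y*(j₂ - j₁*y))^2 := by
    linear_combination (4*j₂^2 - 8*j₁*j₂*y - 4*j₁*j₂*t + 2*j₁*j₂*t^2*y + 4*j₁^2*y^2
      + 4*j₁^2*t*y + j₁^2*t^2 - j₁^2*t^2*y^2 - j₁^2*t^3*y)*hy2
  have hB : (j₂ - j₁*y)^2 + (j₁*j₂*t - j₁^2 - j₂^2)
      = j₁*((j₂*t - 2*j₁) + y*(j₁*t - 2*j₂)) := by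
    linear_combination j₁^2*hy2
  have hBsq : ((j₂*t - 2*j₁) + y*(j₁*t - 2*j₂))^2 = (t^2-4)*(j₂ - j₁*y)^2 := by
    linear_combination (4*j₂^2 - 4*j₁*j₂*t + 4*j₁^2)*hy2
  have key3sq : (j₃*(1+z^2))^2 = (j₂*(t*z))^2 := by
    have hd4 : (j₂ - j₁*y)^2*(j₂ - j₁*y)^2 ≠ 0 := mul_ne_zero hd2ne hd2ne
    refine mul_right_cancel₀ hd4 ?_
    calc (j₃*(1+z^2))^2*((j₂ - j₁*y)^2*(j₂ - j₁*y)^2)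
        = j₃^2*((j₂ - j₁*y)^2 + z^2*(j₂ - j₁*y)^2)^2 := by ring
      _ = j₃^2*((j₂ - j₁*y)^2 + y^2*(j₁*j₂*t - j₁^2 - j₂^2))^2 := by rw [hzd]
      _ = j₃^2*(j₂*((2*j₂ - j₁*t) + y*(j₁*(t^2-2) - j₂*t)))^2 := by rw [hA]
      _ = j₂^2*(j₃^2*(((2*j₂ - j₁*t) + y*(j₁*(t^2-2) - j₂*t))^2)) := by ring
      _ = j₂^2*(j₃^2*((t^2-4)*(y*(j₂ - j₁*y))^2)) := by rw [hAsq]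
      _ = j₂^2*(((j₁*j₂*t - j₁^2 - j₂^2)*t^2)*(y*(j₂ - j₁*y))^2) := by
          linear_combination (-(j₂^2*(y*(j₂ - j₁*y))^2))*hMt
      _ = j₂^2*t^2*(y^2*(j₁*j₂*t - j₁^2 - j₂^2))*(j₂ - j₁*y)^2 := by ring
      _ = j₂^2*t^2*(z^2*(j₂ - j₁*y)^2)*(j₂ - j₁*y)^2 := by rw [hzd]
      _ = (j₂*(t*z))^2*((j₂ - j₁*y)^2*(j₂ - j₁*y)^2) := by ring
  have key2sq : (j₃*(y^2+z^2))^2 = (j₁*(t*(y*z)))^2 := by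
    have hd4 : (j₂ - j₁*y)^2*(j₂ - j₁*y)^2 ≠ 0 := mul_ne_zero hd2ne hd2ne
    refine mul_right_cancel₀ hd4 ?_
    calc (j₃*(y^2+z^2))^2*((j₂ - j₁*y)^2*(j₂ - j₁*y)^2)
        = j₃^2*(y^2*(j₂ - j₁*y)^2 + z^2*(j₂ - j₁*y)^2)^2 := by ring
      _ = j₃^2*(y^2*(j₂ - j₁*y)^2 + y^2*(j₁*j₂*t - j₁^2 - j₂^2))^2 := by rw [hzd]
      _ = j₃^2*(y^2)^2*((j₂ - j₁*y)^2 + (j₁*j₂*t - j₁^2 - j₂^2))^2 := by ring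
      _ = j₃^2*(y^2)^2*(j₁*((j₂*t - 2*j₁) + y*(j₁*t - 2*j₂)))^2 := by rw [hB]
      _ = j₁^2*(y^2)^2*(j₃^2*(((j₂*t - 2*j₁) + y*(j₁*t - 2*j₂))^2)) := by ring
      _ = j₁^2*(y^2)^2*(j₃^2*((t^2-4)*(j₂ - j₁*y)^2)) := by rw [hBsq]
      _ = j₁^2*(y^2)^2*(((j₁*j₂*t - j₁^2 - j₂^2)*t^2)*(j₂ - j₁*y)^2) := by
          linear_combination (-(j₁^2*(y^2)^2*(j₂ - j₁*y)^2))*hMt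
      _ = j₁^2*t^2*y^2*(y^2*(j₁*j₂*t - j₁^2 - j₂^2))*(j₂ - j₁*y)^2 := by ring
      _ = j₁^2*t^2*y^2*(z^2*(j₂ - j₁*y)^2)*(j₂ - j₁*y)^2 := by rw [hzd]
      _ = (j₁*(t*(y*z)))^2*((j₂ - j₁*y)^2*(j₂ - j₁*y)^2) := by ring
  have key3 : j₃*(1+z^2) = j₂*(t*z) := by
    have hL : 0 < j₃*(1+z^2) := by positivity
    have hR : 0 < j₂*(t*z) := mul_pos h₂ (mul_pos ht0 hz0)
    have habs : |j₃*(1+z^2)| = |j₂*(t*z)| := by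
      rw [← Real.sqrt_sq_eq_abs, ← Real.sqrt_sq_eq_abs, key3sq]
    rwa [abs_of_pos hL, abs_of_pos hR] at habs
  have key2 : j₃*(y^2+z^2) = j₁*(t*(y*z)) := by
    have hL : 0 < j₃*(y^2+z^2) := by positivity
    have hR : 0 < j₁*(t*(y*z)) := mul_pos h₁ (mul_pos ht0 (mul_pos hy0 hz0))
    have habs : |j₃*(y^2+z^2)| = |j₁*(t*(y*z))| := by
      rw [← Real.sqrt_sq_eq_abs, ← Real.sqrt_sq_eq_abs, key2sq]
    rwa [abs_of_pos hL, abs_of_pos hR] at habs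
  exact ⟨hz0, hd, hz2, key3, key2⟩

set_option maxHeartbeats 2000000 in
/-- Case 3 of Lemma 6 of the paper: for pairwise distinct positive
`j₁, j₂, j₃`, with `t₀ > 2` a root of the resolvent cubic,
`y± = (t₀ ± √(t₀² − 4))/2`, `z± = √(y±(j₁ − j₂y±)/(j₂ − j₁y±))`,
`b₁± = (j₃/(t₀y±z±))^{1/3}`, `b₂± = y±b₁±`, `b₃± = z±b₁±`, and
`K = (j₃/t₀)^{2/3}`, the strength invariant satisfies
`(b₁±b₂±)² + (b₂±b₃±)² + (b₃±b₁±)² = K²(y±² + z±² + y±²z±²)/(y±z±)^{4/3}`,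
and the values for the two signs are different. -/
theorem strength_invariant_case_c (j₁ j₂ j₃ : ℝ)
    (h₁ : 0 < j₁) (h₂ : 0 < j₂) (h₃ : 0 < j₃)
    (h₁₂ : j₁ ≠ j₂) (h₁₃ : j₁ ≠ j₃) (h₂₃ : j₂ ≠ j₃)
    (t₀ : ℝ) (ht₀ : 2 < t₀)
    (hroot : j₁ * j₂ * t₀ ^ 3 - (j₁ ^ 2 + j₂ ^ 2 + j₃ ^ 2) * t₀ ^ 2
      + 4 * j₃ ^ 2 = 0)
    (yp ym zp zm b1p b1m b2p b2m b3p b3m K : ℝ)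
    (hyp : yp = (t₀ + Real.sqrt (t₀ ^ 2 - 4)) / 2)
    (hym : ym = (t₀ - Real.sqrt (t₀ ^ 2 - 4)) / 2)
    (hzp : zp = Real.sqrt (yp * (j₁ - j₂ * yp) / (j₂ - j₁ * yp)))
    (hzm : zm = Real.sqrt (ym * (j₁ - j₂ * ym) / (j₂ - j₁ * ym)))
    (hb1p : b1p = (j₃ / (t₀ * yp * zp)) ^ ((1 : ℝ) / 3))
    (hb1m : b1m = (j₃ / (t₀ * ym * zm)) ^ ((1 : ℝ) / 3))
    (hb2p : b2p = yp * b1p) (hb2m : b2m = ym * b1m)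
    (hb3p : b3p = zp * b1p) (hb3m : b3m = zm * b1m)
    (hK : K = (j₃ / t₀) ^ ((2 : ℝ) / 3)) :
    (b1p * b2p) ^ 2 + (b2p * b3p) ^ 2 + (b3p * b1p) ^ 2
      = K ^ 2 * (yp ^ 2 + zp ^ 2 + yp ^ 2 * zp ^ 2) / (yp * zp) ^ ((4 : ℝ) / 3) ∧
    (b1m * b2m) ^ 2 + (b2m * b3m) ^ 2 + (b3m * b1m) ^ 2
      = K ^ 2 * (ym ^ 2 + zm ^ 2 + ym ^ 2 * zm ^ 2) / (ym * zm) ^ ((4 : ℝ) / 3) ∧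
    (b1p * b2p) ^ 2 + (b2p * b3p) ^ 2 + (b3p * b1p) ^ 2
      ≠ (b1m * b2m) ^ 2 + (b2m * b3m) ^ 2 + (b3m * b1m) ^ 2 := by
  have ht0 : (0:ℝ) < t₀ := by linarith
  have h4 : (0:ℝ) < t₀^2 - 4 := by nlinarith
  set s := Real.sqrt (t₀^2 - 4) with hs
  have hs2 : s^2 = t₀^2 - 4 := Real.sq_sqrt h4.le
  have hs0 : 0 < s := Real.sqrt_pos.mpr h4
  have hst : s < t₀ := by nlinarith
  have hyp0 : 0 < yp := by rw [hyp]; linarith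
  have hym0 : 0 < ym := by rw [hym]; linarith
  have hyp2 : yp^2 = t₀*yp - 1 := by rw [hyp]; linear_combination hs2/4
  have hym2 : ym^2 = t₀*ym - 1 := by rw [hym]; linear_combination hs2/4
  have hsum : yp + ym = t₀ := by rw [hyp, hym]; ring
  have hprod : yp * ym = 1 := by rw [hyp, hym]; linear_combination (-1/4)*hs2
  have hroot' : j₁*j₂*t₀^3 - (j₁^2+j₂^2+j₃^2)*t₀^2 + 4*j₃^2 = 0 := by linear_combination hroot
  obtain ⟨hzp0, hdp, hz2p, key3p, key2p⟩ :=
    branch j₁ j₂ j₃ t₀ yp zp h₁ h₂ h₃ ht₀ hroot' hyp0 hyp2 hzp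
  obtain ⟨hzm0, hdm, hz2m, key3m, key2m⟩ :=
    branch j₁ j₂ j₃ t₀ ym zm h₁ h₂ h₃ ht₀ hroot' hym0 hym2 hzm
  have part1 := val_eq j₃ t₀ yp zp K b1p b2p b3p h₃ ht0 hyp0 hzp0 hb1p hb2p hb3p hK
  have part2 := val_eq j₃ t₀ ym zm K b1m b2m b3m h₃ ht0 hym0 hzm0 hb1m hb2m hb3m hK
  refine ⟨part1, part2, ?_⟩
  rw [part1, part2]
  intro heq
  -- zp * zm = 1
  have hzz : zp * zm = 1 := by
    have hprodE : (yp*(j₁ - j₂*yp)/(j₂ - j₁*yp)) * (ym*(j₁ - j₂*ym)/(j₂ - j₁*ym)) = 1 := by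
      rw [div_mul_div_comm, div_eq_one_iff_eq (mul_ne_zero hdp hdm)]
      linear_combination (j₂^2*yp^2*ym - j₂^2*yp^3 + j₂^2*t₀*yp^2 + j₁*j₂
        - j₁*j₂*yp*ym - j₁*j₂*t₀*yp)*hsum
        + (-j₂^2 + j₂^2*yp^2 - j₂^2*t₀*yp + j₁*j₂*t₀)*hyp2
    have hsq : (zp*zm)^2 = 1 := by rw [mul_pow, hz2p, hz2m]; exact hprodE
    have h1 : 0 < zp*zm := mul_pos hzp0 hzm0
    have h2 : (zp*zm - 1)*(zp*zm + 1) = 0 := by linear_combination hsq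
    rcases mul_eq_zero.mp h2 with h|h
    · linarith
    · linarith
  have hyzp : 0 < yp*zp := mul_pos hyp0 hzp0
  have hyzm : 0 < ym*zm := mul_pos hym0 hzm0
  set q : ℝ := (yp*zp) ^ ((1:ℝ)/3) with hqdef
  have hq0 : 0 < q := Real.rpow_pos_of_pos hyzp _
  have hq3 : q^(3:ℕ) = yp*zp := rpow_third_cube _ hyzp
  have hPm : (yp*zp)*(ym*zm) = 1 := by
    calc (yp*zp)*(ym*zm) = (yp*ym)*(zp*zm) := by ring
      _ = 1 := by rw [hprod, hzz, mul_one]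
  have hm3 : ym*zm = (q⁻¹)^(3:ℕ) := by
    rw [inv_pow, hq3]
    exact eq_inv_of_mul_eq_one_right (by linear_combination hPm)
  have hp43 : (yp*zp) ^ ((4:ℝ)/3) = q^(4:ℕ) := by rw [← hq3]; exact cube_rpow_four q hq0
  have hm43 : (ym*zm) ^ ((4:ℝ)/3) = (q⁻¹)^(4:ℕ) := by
    rw [hm3]; exact cube_rpow_four _ (by positivity)
  rw [hp43, hm43] at heq
  have hK0 : 0 < K := by rw [hK]; exact Real.rpow_pos_of_pos (by positivity) _
  -- clear denominators
  have h8 : yp^2+zp^2+yp^2*zp^2 = (ym^2+zm^2+ym^2*zm^2)*q^8 := by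
    rw [div_eq_div_iff (by positivity) (by positivity)] at heq
    field_simp at heq
    have hK2 : (K^2:ℝ) ≠ 0 := by positivity
    apply mul_left_cancel₀ hK2
    linear_combination K^2*heq
  -- express the two strength values through q
  have hq3' : q^3 = yp*zp := by exact_mod_cast hq3
  have hm3' : (q⁻¹)^3 = ym*zm := by exact_mod_cast hm3.symm
  have hSp : j₃*(yp^2+zp^2+yp^2*zp^2) = j₁*(t₀*q^3) + j₃*q^6 := by
    linear_combination key2p - (j₁*t₀ + j₃*(q^3 + yp*zp))*hq3'
  have hSm : j₃*(ym^2+zm^2+ym^2*zm^2) = j₁*(t₀*(q⁻¹)^3) + j₃*(q⁻¹)^6 := by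
    linear_combination key2m - (j₁*t₀ + j₃*((q⁻¹)^3 + ym*zm))*hm3'
  have hqinv : q⁻¹*q = 1 := inv_mul_cancel₀ hq0.ne'
  have hpoly : j₁*(t₀*q^3) + j₃*q^6 = j₁*(t₀*q^5) + j₃*q^2 := by
    have e : j₁*(t₀*q^3) + j₃*q^6 = (j₁*(t₀*(q⁻¹)^3) + j₃*(q⁻¹)^6)*q^8 := by
      rw [← hSp, ← hSm]
      linear_combination j₃*h8
    calc j₁*(t₀*q^3) + j₃*q^6 = (j₁*(t₀*(q⁻¹)^3) + j₃*(q⁻¹)^6)*q^8 := e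
      _ = j₁*(t₀*q^5)*((q⁻¹*q)^3) + j₃*q^2*((q⁻¹*q)^6) := by ring
      _ = j₁*(t₀*q^5) + j₃*q^2 := by rw [hqinv]; ring
  have hfac : q^2*((q^2-1)*(j₃*(q^2+1)-j₁*(t₀*q))) = 0 := by linear_combination hpoly
  have hq2 : (q:ℝ)^2 ≠ 0 := by positivity
  have h0 : (q^2-1)*(j₃*(q^2+1)-j₁*(t₀*q)) = 0 := (mul_eq_zero.mp hfac).resolve_left hq2
  rcases mul_eq_zero.mp h0 with h1|h2
  · -- q = 1, so yp*zp = 1, forcing j₂ = j₃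
    have hq1 : q = 1 := by
      have e : (q-1)*(q+1) = 0 := by linear_combination h1
      rcases mul_eq_zero.mp e with h|h
      · linarith
      · linarith
    have hyz1 : yp*zp = 1 := by rw [← hq3', hq1]; norm_num
    have : (j₂ - j₃)*(t₀*yp) = 0 := by
      linear_combination (-(yp^2))*key3p + (j₃*(yp*zp+1) - j₂*(t₀*yp))*hyz1 + j₃*hyp2
    have h23 : j₂ = j₃ := by
      rcases mul_eq_zero.mp this with h|h
      · linarith [sub_eq_zero.mp h]
      · exact absurd h (mul_pos ht0 hyp0).ne'
    exact h₂₃ h23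
  · -- j₃(q²+1) = j₁t₀q : the geometric cases
    have hfac2 : j₃*((yp - q*zp)*(q*yp - zp)) = 0 := by
      linear_combination q*key2p - yp*zp*h2
    have h00 : (yp - q*zp)*(q*yp - zp) = 0 := by
      rcases mul_eq_zero.mp hfac2 with h|h
      · exact absurd h h₃.ne'
      · exact h
    rcases mul_eq_zero.mp h00 with ha|hb
    · -- yp = q·zp  ⇒  zp = q, yp = zp², forcing j₁ = j₂
      have e : q*(q^2 - zp^2) = 0 := by linear_combination hq3' + zp*ha
      have e2 : q^2 = zp^2 := by
        rcases mul_eq_zero.mp e with h|h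
        · exact absurd h hq0.ne'
        · linarith [sub_eq_zero.mp h]
      have hzq : zp = q := by
        have e3 : (zp - q)*(zp + q) = 0 := by linear_combination -e2
        rcases mul_eq_zero.mp e3 with h|h
        · linarith
        · linarith
      have hyz2 : yp = zp^2 := by linear_combination ha - zp*hzq
      have : (j₁ - j₂)*(t₀*zp^3) = 0 := by
        linear_combination zp^2*key3p - key2p + (j₃*(yp+zp^2) - j₁*(t₀*zp))*hyz2
      have h12 : j₁ = j₂ := by
        rcases mul_eq_zero.mp this with h|h
        · linarith [sub_eq_zero.mp h]
        · exact absurd h (mul_pos ht0 (pow_pos hzp0 3)).ne'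
      exact h₁₂ h12
    · -- zp = q·yp  ⇒  yp = q, zp = yp², forcing j₁ = j₃
      have e : q*(q^2 - yp^2) = 0 := by linear_combination hq3' - yp*hb
      have e2 : q^2 = yp^2 := by
        rcases mul_eq_zero.mp e with h|h
        · exact absurd h hq0.ne'
        · linarith [sub_eq_zero.mp h]
      have hyq : yp = q := by
        have e3 : (yp - q)*(yp + q) = 0 := by linear_combination -e2
        rcases mul_eq_zero.mp e3 with h|h
        · linarith
        · linarith
      have hzp2 : zp = yp^2 := by linear_combination -hb - yp*hyq
      have : (j₁ - j₃)*(yp^2*(yp^2+1)) = 0 := by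
        linear_combination -key2p + j₁*yp^2*hyp2 - (j₁*(t₀*yp) - j₃*(zp+yp^2))*hzp2
      have h13 : j₁ = j₃ := by
        rcases mul_eq_zero.mp this with h|h
        · linarith [sub_eq_zero.mp h]
        · exact absurd h (mul_pos (pow_pos hyp0 2) (by positivity)).ne'
      exact h₁₃ h13
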